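/- (Universality.) For every integer m ≥ 0 and every permutation σ of {1,…,m} there exists a polynomial P with integer coefficients in m+1 variables y, x_1, …, x_m such that for every integer N ≥ 1, w_{gl_N}(σ) = P(N·1, C_1, C_2, …, C_m) in U(gl_N), where C_j denotes the j-th Casimir element of U(gl_N); the polynomial P is independent of N. -/

import Mathlib

open scoped BigOperators

attribute [local instance] LieRing.ofAssociativeRing

/-- The Lie algebra `gl_N` of `N × N` complex matrices (with bracket `[x,y] = x*y - y*x`). -/
abbrev gl (N : ℕ) := Matrix (Fin N) (Fin N) ℂ

/-- The canonical embedding of `gl_N` into its universal enveloping algebra. -/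
noncomputable def ιgl (N : ℕ) (x : gl N) : UniversalEnvelopingAlgebra ℂ (gl N) :=
  UniversalEnvelopingAlgebra.ι ℂ x

/-- The matrix unit `E_{ij}`. -/
def E {N : ℕ} (i j : Fin N) : gl N := Matrix.single i j (1 : ℂ)

/-- The value of the `gl_N` invariant on a permutation `σ` of `{1, …, m}`. -/
noncomputable def wgl (N m : ℕ) (σ : Equiv.Perm (Fin m)) :
    UniversalEnvelopingAlgebra ℂ (gl N) :=
  ∑ i : Fin m → Fin N, (List.ofFn fun t : Fin m => ιgl N (E (i t) (i (σ t)))).prod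

/-- The `k`-th Casimir element `C_k = Σ E_{i_1 i_2} E_{i_2 i_3} ⋯ E_{i_k i_1}`, i.e. the
value of `w_{gl_N}` on the cyclic permutation `1 ↦ 2 ↦ ⋯ ↦ k ↦ 1`. -/
noncomputable def casimir (N k : ℕ) : UniversalEnvelopingAlgebra ℂ (gl N) :=
  wgl N k (finRotate k)

/-- The evaluation of a multivariate integer polynomial `P` in the variables
`y, x_1, …, x_m` (indexed by `Fin (m+1)`, with `0 ↦ y`) at the elements
`N·1, C_1, …, C_m` of `U(gl_N)` (these elements commute pairwise, being central). -/
noncomputable def evalAtCasimirs (N m : ℕ) (P : MvPolynomial (Fin (m + 1)) ℤ) :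
    UniversalEnvelopingAlgebra ℂ (gl N) :=
  ∑ d ∈ P.support,
    P.coeff d •
      (List.ofFn fun v : Fin (m + 1) =>
        (Fin.cases ((N : UniversalEnvelopingAlgebra ℂ (gl N)))
            (fun j : Fin m => casimir N ((j : ℕ) + 1)) v) ^ d v).prod

namespace WUniv

noncomputable def xcas (N m : ℕ) : Fin (m+1) → UniversalEnvelopingAlgebra ℂ (gl N) :=
  Fin.cases ((N : UniversalEnvelopingAlgebra ℂ (gl N))) (fun j : Fin m => casimir N ((j:ℕ)+1))

noncomputable def Phi (N m : ℕ) (d : Fin (m+1) →₀ ℕ) : UniversalEnvelopingAlgebra ℂ (gl N) :=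
  (List.ofFn fun v => xcas N m v ^ d v).prod

lemma evalAtCasimirs_def (N m : ℕ) (P : MvPolynomial (Fin (m+1)) ℤ) :
    evalAtCasimirs N m P = ∑ d ∈ P.support, P.coeff d • Phi N m d := rfl

lemma eval_superset (N m : ℕ) (P : MvPolynomial (Fin (m+1)) ℤ) (u : Finset (Fin (m+1) →₀ ℕ))
    (hu : P.support ⊆ u) :
    evalAtCasimirs N m P = ∑ d ∈ u, P.coeff d • Phi N m d := by
  rw [evalAtCasimirs_def]
  exact Finset.sum_subset hu (fun d _ hd => by
    rw [MvPolynomial.notMem_support_iff.mp hd, zero_smul])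

lemma eval_add (N m : ℕ) (P Q : MvPolynomial (Fin (m+1)) ℤ) :
    evalAtCasimirs N m (P + Q) = evalAtCasimirs N m P + evalAtCasimirs N m Q := by
  rw [eval_superset N m (P+Q) (P.support ∪ Q.support) (MvPolynomial.support_add),
      eval_superset N m P (P.support ∪ Q.support) Finset.subset_union_left,
      eval_superset N m Q (P.support ∪ Q.support) Finset.subset_union_right,
      ← Finset.sum_add_distrib]
  exact Finset.sum_congr rfl fun d _ => by rw [MvPolynomial.coeff_add, add_smul]

lemma eval_neg (N m : ℕ) (P : MvPolynomial (Fin (m+1)) ℤ) :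
    evalAtCasimirs N m (-P) = - evalAtCasimirs N m P := by
  rw [evalAtCasimirs_def, evalAtCasimirs_def, ← Finset.sum_neg_distrib]
  rw [MvPolynomial.support_neg]
  exact Finset.sum_congr rfl fun d _ => by rw [MvPolynomial.coeff_neg, neg_smul]

lemma eval_monomial (N m : ℕ) (d : Fin (m+1) →₀ ℕ) (c : ℤ) :
    evalAtCasimirs N m (MvPolynomial.monomial d c) = c • Phi N m d := by
  by_cases hc : c = 0
  · subst hc
    simp [evalAtCasimirs_def, MvPolynomial.support_monomial]
  · rw [evalAtCasimirs_def, MvPolynomial.support_monomial, if_neg hc, Finset.sum_singleton,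
      MvPolynomial.coeff_monomial, if_pos rfl]

end WUniv


namespace WUniv
-- generic list-of-powers lemma
lemma ofFn_pow_prod_pull {M : Type} [Monoid M] :
    ∀ (n : ℕ) (x : Fin n → M) (d e : Fin n → ℕ) (k : Fin n),
    (∀ v : Fin n, v < k → Commute (x v ^ d v) (x k)) →
    (∀ v, e v = d v + if v = k then 1 else 0) →
    (List.ofFn fun v => x v ^ e v).prod = x k * (List.ofFn fun v => x v ^ d v).prod := by
  intro n
  induction n with
  | zero => intro x d e k _ _; exact absurd k.2 (by omega)
  | succ n ih =>
    intro x d e k hcomm he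
    rw [List.ofFn_succ, List.ofFn_succ, List.prod_cons, List.prod_cons]
    rcases Fin.eq_zero_or_eq_succ k with hk | ⟨j, hj⟩
    · subst hk
      have h0 : e 0 = d 0 + 1 := by rw [he 0, if_pos rfl]
      have hrest : (List.ofFn fun v : Fin n => x v.succ ^ e v.succ)
          = (List.ofFn fun v : Fin n => x v.succ ^ d v.succ) := by
        congr 1; funext v
        rw [he v.succ, if_neg (Fin.succ_ne_zero v), add_zero]
      rw [h0, hrest, pow_succ', mul_assoc]
    · subst hj
      have h0 : e 0 = d 0 := by rw [he 0, if_neg (Fin.succ_ne_zero j).symm, add_zero]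
      have hrest : (List.ofFn fun v : Fin n => x v.succ ^ e v.succ).prod
          = x j.succ * (List.ofFn fun v : Fin n => x v.succ ^ d v.succ).prod := by
        refine ih (fun v => x v.succ) (fun v => d v.succ) (fun v => e v.succ) j
          (fun v hv => hcomm v.succ (by simpa using hv)) (fun v => ?_)
        show e v.succ = d v.succ + _
        rw [he v.succ]
        congr 1
        simp [Fin.succ_inj]
      rw [h0, hrest, ← mul_assoc, ← mul_assoc]
      congr 1
      exact (hcomm 0 (Fin.succ_pos j)).eq
end WUniv

namespace WUniv

lemma phi_zero (N m : ℕ) : Phi N m 0 = 1 := by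
  simp [Phi]

lemma xcas_zero (N m : ℕ) : xcas N m 0 = (N : UniversalEnvelopingAlgebra ℂ (gl N)) := rfl

lemma xcas_ne_zero (N m : ℕ) (k : Fin (m+1)) (hk : k ≠ 0) :
    xcas N m k = casimir N (k : ℕ) := by
  obtain ⟨j, rfl⟩ := Fin.eq_succ_of_ne_zero hk
  simp [xcas]

lemma phi_pull (N m : ℕ) (k : Fin (m+1)) (d : Fin (m+1) →₀ ℕ)
    (hd : ∀ v : Fin (m+1), v ≠ 0 → v < k → d v = 0) :
    Phi N m (Finsupp.single k 1 + d) = xcas N m k * Phi N m d := by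
  refine ofFn_pow_prod_pull (m+1) (xcas N m) (fun v => d v) (fun v => (Finsupp.single k 1 + d : Fin (m+1) →₀ ℕ) v) k ?_ ?_
  · intro v hv
    show Commute (xcas N m v ^ d v) (xcas N m k)
    by_cases hv0 : v = 0
    · subst hv0
      rw [xcas_zero]
      exact Commute.pow_left (Nat.cast_commute N (xcas N m k)) _
    · rw [hd v hv0 hv, pow_zero]
      exact Commute.one_left _
  · intro v
    show (Finsupp.single k 1 + d : Fin (m+1) →₀ ℕ) v = d v + if v = k then 1 else 0
    rw [Finsupp.add_apply, Finsupp.single_apply, add_comm]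
    congr 1
    simp [eq_comm]

lemma eval_monomial_sorted (N m : ℕ) :
    ∀ (ks : List (Fin (m+1))), ks.Pairwise (· ≤ ·) → (∀ k ∈ ks, k ≠ 0) →
    evalAtCasimirs N m (MvPolynomial.monomial ((ks.map fun k => Finsupp.single k 1).sum) 1)
      = (ks.map fun k => xcas N m k).prod := by
  intro ks
  induction ks with
  | nil =>
    intro _ _
    rw [List.map_nil, List.sum_nil, List.map_nil, List.prod_nil]
    rw [show (MvPolynomial.monomial (0 : Fin (m+1) →₀ ℕ) (1:ℤ)) = MvPolynomial.monomial 0 1 from rfl,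
      eval_monomial, phi_zero, one_smul]
  | cons k t ih =>
    intro hs hne
    rw [List.map_cons, List.sum_cons, List.map_cons, List.prod_cons, eval_monomial, one_smul,
      phi_pull N m k _ ?_]
    · rw [← ih hs.of_cons (fun x hx => hne x (List.mem_cons_of_mem _ hx)), eval_monomial, one_smul]
    · intro v hv0 hvk
      have hsum : ((t.map fun k => Finsupp.single k 1).sum) v
          = ((t.map fun k => Finsupp.single k 1).map (fun f => f v)).sum :=
        map_list_sum (Finsupp.applyAddHom (M := ℕ) v) _
      rw [hsum, List.map_map]
      refine List.sum_eq_zero fun x hx => ?_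
      obtain ⟨b, hb, rfl⟩ := List.mem_map.mp hx
      have hkb : k ≤ b := (List.pairwise_cons.mp hs).1 b hb
      have : v ≠ b := fun h => absurd (h ▸ hvk) (not_lt.mpr (h ▸ hkb))
      simp [Finsupp.single_apply, this.symm]

lemma good_casimir_prod (m : ℕ) (ks : List ℕ) (hsort : ks.Pairwise (· ≤ ·))
    (hks : ∀ k ∈ ks, 1 ≤ k ∧ k ≤ m) :
    ∃ P : MvPolynomial (Fin (m+1)) ℤ, ∀ N : ℕ,
      evalAtCasimirs N m P = (ks.map fun k => casimir N k).prod := by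
  have hlt : ∀ k ∈ ks, k < m + 1 := fun k hk => by have := (hks k hk).2; omega
  set ks' : List (Fin (m+1)) := ks.pmap (fun k (h : k < m+1) => (⟨k, h⟩ : Fin (m+1))) hlt with hks'
  refine ⟨MvPolynomial.monomial ((ks'.map fun k => Finsupp.single k 1).sum) 1, fun N => ?_⟩
  have hsort' : ks'.Pairwise (· ≤ ·) := by
    rw [hks']
    exact List.Pairwise.pmap hsort _ (fun a ha b hb hab => by
      simpa [Fin.mk_le_mk] using hab)
  have hne' : ∀ k ∈ ks', k ≠ 0 := by
    intro k hk
    rw [hks'] at hk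
    obtain ⟨b, hb, _, rfl⟩ := List.mem_pmap.mp hk
    have h1 := (hks b hb).1
    intro heq
    rw [Fin.ext_iff] at heq
    simp at heq
    omega
  rw [eval_monomial_sorted N m ks' hsort' hne']
  rw [hks', List.map_pmap]
  have hgen : ∀ (l : List ℕ) (hl : ∀ k ∈ l, k < m+1), (∀ k ∈ l, 1 ≤ k) →
      List.pmap (fun k (h : k < m+1) => xcas N m ⟨k, h⟩) l hl = l.map (casimir N) := by
    intro l
    induction l with
    | nil => intros; rfl
    | cons a t iht =>
      intro hl hl1
      rw [List.pmap, List.map_cons, iht _ (fun k hk => hl1 k (List.mem_cons_of_mem _ hk))]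
      congr 1
      rw [xcas_ne_zero N m _ (by
        intro heq
        rw [Fin.ext_iff] at heq
        simp at heq
        have := hl1 a (List.mem_cons_self (a := a) (l := t))
        omega)]
  rw [hgen ks hlt (fun k hk => (hks k hk).1)]

end WUniv




namespace WUniv

noncomputable def WS (N : ℕ) (ι : Type) [Fintype ι] [DecidableEq ι] (s : List ι) (σ : ι → ι) :
    UniversalEnvelopingAlgebra ℂ (gl N) :=
  ∑ i : ι → Fin N, (s.map fun a => ιgl N (E (i a) (i (σ a)))).prod

lemma wgl_eq_WS (N m : ℕ) (σ : Equiv.Perm (Fin m)) :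
    wgl N m σ = WS N (Fin m) (List.finRange m) σ := by
  unfold wgl WS
  refine Finset.sum_congr rfl fun i _ => ?_
  rw [List.ofFn_eq_map]

lemma casimir_eq_WS (N k : ℕ) :
    casimir N k = WS N (Fin k) (List.finRange k) (finRotate k) := wgl_eq_WS N k (finRotate k)

lemma WS_relabel (N : ℕ) {ι κ : Type} [Fintype ι] [DecidableEq ι] [Fintype κ] [DecidableEq κ]
    (e : κ ≃ ι) (s : List κ) (σι : ι → ι) (σκ : κ → κ)
    (h : ∀ x ∈ s, σι (e x) = e (σκ x)) :
    WS N ι (s.map e) σι = WS N κ s σκ := by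
  unfold WS
  refine Fintype.sum_equiv (Equiv.arrowCongr e.symm (Equiv.refl (Fin N))) _ _ fun i => ?_
  rw [List.map_map]
  refine congrArg List.prod (List.map_congr_left fun x hx => ?_)
  have h1 : (Equiv.arrowCongr e.symm (Equiv.refl (Fin N))) i = fun z => i (e z) := rfl
  simp only [Function.comp, h1, h x hx]

lemma WS_split (N : ℕ) {ι : Type} [Fintype ι] [DecidableEq ι] (p : ι → Prop) [DecidablePred p]
    (s₁ : List {x // p x}) (s₂ : List {x // ¬ p x}) (σ : ι → ι)
    (σ₁ : {x // p x} → {x // p x}) (σ₂ : {x // ¬ p x} → {x // ¬ p x})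
    (h₁ : ∀ x ∈ s₁, σ (x : ι) = σ₁ x) (h₂ : ∀ x ∈ s₂, σ (x : ι) = σ₂ x) :
    WS N ι (s₁.map Subtype.val ++ s₂.map Subtype.val) σ
      = WS N {x // p x} s₁ σ₁ * WS N {x // ¬ p x} s₂ σ₂ := by
  unfold WS
  rw [Finset.sum_mul_sum, ← Finset.sum_product', Finset.univ_product_univ]
  set Φ : (({x // p x} → Fin N) × ({x // ¬ p x} → Fin N)) ≃ (ι → Fin N) :=
    (Equiv.sumArrowEquivProdArrow _ _ _).symm.trans
      (Equiv.arrowCongr (Equiv.sumCompl p) (Equiv.refl _)) with hΦ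
  refine (Fintype.sum_equiv Φ _ _ fun x => ?_).symm
  have key : ∀ z : ι, (Φ x) z = Sum.elim x.1 x.2 ((Equiv.sumCompl p).symm z) := by
    intro z
    rw [hΦ]
    simp [Equiv.sumArrowEquivProdArrow]
  rw [List.map_append, List.prod_append, List.map_map, List.map_map]
  symm
  congr 1
  · refine congrArg List.prod (List.map_congr_left fun z hz => ?_)
    simp only [Function.comp]
    rw [key (z : ι), key (σ (z : ι)), h₁ z hz,
      Equiv.sumCompl_symm_apply_of_pos z.2, Equiv.sumCompl_symm_apply_of_pos (σ₁ z).2]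
    rfl
  · refine congrArg List.prod (List.map_congr_left fun z hz => ?_)
    simp only [Function.comp]
    rw [key (z : ι), key (σ (z : ι)), h₂ z hz,
      Equiv.sumCompl_symm_apply_of_neg z.2, Equiv.sumCompl_symm_apply_of_neg (σ₂ z).2]
    rfl

lemma eval_X0_mul (N m : ℕ) (P : MvPolynomial (Fin (m+1)) ℤ) :
    evalAtCasimirs N m (MvPolynomial.X 0 * P)
      = (N : UniversalEnvelopingAlgebra ℂ (gl N)) * evalAtCasimirs N m P := by
  induction P using MvPolynomial.induction_on' with
  | monomial d c =>
    rw [show (MvPolynomial.X (0 : Fin (m+1)) : MvPolynomial (Fin (m+1)) ℤ)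
        = MvPolynomial.monomial (Finsupp.single 0 1) 1 from rfl,
      MvPolynomial.monomial_mul, one_mul, eval_monomial, eval_monomial,
      phi_pull N m 0 d (fun v hv0 hv => absurd hv (not_lt.mpr (Fin.zero_le v))),
      xcas_zero, mul_smul_comm]
  | add P Q ihP ihQ =>
    rw [mul_add, eval_add, eval_add, ihP, ihQ, mul_add]

def Good (m : ℕ) (f : (N : ℕ) → UniversalEnvelopingAlgebra ℂ (gl N)) : Prop :=
  ∃ P : MvPolynomial (Fin (m+1)) ℤ, ∀ N : ℕ, 1 ≤ N → f N = evalAtCasimirs N m P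

lemma Good.add {m : ℕ} {f g} (hf : Good m f) (hg : Good m g) :
    Good m (fun N => f N + g N) := by
  obtain ⟨P, hP⟩ := hf; obtain ⟨Q, hQ⟩ := hg
  exact ⟨P + Q, fun N hN => by show f N + g N = _; rw [eval_add, hP N hN, hQ N hN]⟩

lemma Good.neg {m : ℕ} {f} (hf : Good m f) : Good m (fun N => - f N) := by
  obtain ⟨P, hP⟩ := hf
  exact ⟨-P, fun N hN => by show - f N = _; rw [eval_neg, hP N hN]⟩

lemma Good.sub {m : ℕ} {f g} (hf : Good m f) (hg : Good m g) :
    Good m (fun N => f N - g N) := by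
  have := hf.add hg.neg
  simpa [sub_eq_add_neg] using this

lemma Good.natmul {m : ℕ} {f} (hf : Good m f) :
    Good m (fun N => (N : UniversalEnvelopingAlgebra ℂ (gl N)) * f N) := by
  obtain ⟨P, hP⟩ := hf
  exact ⟨MvPolynomial.X 0 * P, fun N hN => by
    show (N : UniversalEnvelopingAlgebra ℂ (gl N)) * f N = _
    rw [eval_X0_mul, hP N hN]⟩

lemma Good.casprod {m : ℕ} (ks : List ℕ) (hsort : ks.Pairwise (· ≤ ·))
    (hks : ∀ k ∈ ks, 1 ≤ k ∧ k ≤ m) :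
    Good m (fun N => (ks.map fun k => casimir N k).prod) := by
  obtain ⟨P, hP⟩ := good_casimir_prod m ks hsort hks
  exact ⟨P, fun N _ => (hP N).symm⟩

end WUniv

namespace WUniv

def clist {ι : Type} (σ : Equiv.Perm ι) (x : ι) (k : ℕ) : List ι :=
  List.ofFn (fun j : Fin k => (σ^(j:ℕ)) x)

lemma mem_clist {ι : Type} (σ : Equiv.Perm ι) (x y : ι) (k : ℕ) :
    y ∈ clist σ x k ↔ ∃ j, j < k ∧ (σ^j) x = y := by
  rw [clist, List.mem_ofFn]
  constructor
  · rintro ⟨j, rfl⟩; exact ⟨j, j.2, rfl⟩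
  · rintro ⟨j, hj, rfl⟩; exact ⟨⟨j, hj⟩, rfl⟩

lemma clist_closed {ι : Type} (σ : Equiv.Perm ι) (x : ι) (k : ℕ) (hk : 0 < k)
    (hfix : (σ^k) x = x) (y : ι) : y ∈ clist σ x k ↔ σ y ∈ clist σ x k := by
  rw [mem_clist, mem_clist]
  constructor
  · rintro ⟨j, hj, rfl⟩
    by_cases h : j + 1 = k
    · refine ⟨0, hk, ?_⟩
      rw [pow_zero, Equiv.Perm.one_apply]
      have : σ ((σ^j) x) = (σ^(j+1)) x := by rw [pow_succ']; rfl
      rw [this, h, hfix]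
    · refine ⟨j+1, by omega, ?_⟩
      rw [pow_succ']; rfl
  · rintro ⟨j, hj, hje⟩
    rcases Nat.eq_zero_or_pos j with rfl | hjpos
    · refine ⟨k-1, by omega, ?_⟩
      apply σ.injective
      have h2 : σ ((σ^(k-1)) x) = (σ^(k-1+1)) x := by rw [pow_succ']; rfl
      rw [show k-1+1 = k from by omega] at h2
      rw [h2, hfix, ← hje, pow_zero]
      rfl
    · refine ⟨j-1, by omega, σ.injective ?_⟩
      have h2 : σ ((σ^(j-1)) x) = (σ^(j-1+1)) x := by rw [pow_succ']; rfl
      rw [show j-1+1 = j from by omega] at h2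
      rw [h2, hje]

lemma clist_nodup_minimal {ι : Type} (σ : Equiv.Perm ι) (x : ι) :
    (clist σ x (Function.minimalPeriod (⇑σ) x)).Nodup := by
  rw [clist, List.nodup_ofFn]
  intro a b hab
  have := Function.iterate_injOn_Iio_minimalPeriod (f := ⇑σ) (x := x)
    (Set.mem_Iio.mpr a.2) (Set.mem_Iio.mpr b.2) (by exact hab)
  exact Fin.ext this

lemma clist_subtype {ι : Type} (σ : Equiv.Perm ι) (p : ι → Prop)
    (h : ∀ y, p y ↔ p (σ y)) (x : {y // p y}) (k : ℕ) :
    (clist (σ.subtypePerm (fun y => (h y).symm)) x k).map Subtype.val = clist σ (x : ι) k := by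
  rw [clist, clist, List.map_ofFn]
  congr 1
  funext j
  rw [Function.comp_apply, Equiv.Perm.subtypePerm_pow, Equiv.Perm.subtypePerm_apply]

theorem cyc_decomp : ∀ (n : ℕ) (ι : Type) [Fintype ι] [DecidableEq ι],
    Fintype.card ι = n → ∀ (σ : Equiv.Perm ι),
    ∃ pts : List (ι × ℕ),
      (∀ q ∈ pts, 0 < q.2 ∧ (σ^q.2) q.1 = q.1) ∧
      (pts.flatMap fun q => clist σ q.1 q.2).Nodup ∧
      (∀ y : ι, y ∈ pts.flatMap fun q => clist σ q.1 q.2) := by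
  intro n
  induction n using Nat.strong_induction_on with
  | _ n IH =>
  intro ι _ _ hcard σ
  rcases isEmpty_or_nonempty ι with hι | hι
  · exact ⟨[], by simp, by simp, fun y => (hι.false y).elim⟩
  · obtain ⟨x⟩ := hι
    set k := Function.minimalPeriod (⇑σ) x with hkdef
    have hper : x ∈ Function.periodicPts (⇑σ) := by
      refine ⟨orderOf σ, orderOf_pos σ, ?_⟩
      show (⇑σ)^[orderOf σ] x = x
      have : (⇑σ)^[orderOf σ] x = (σ ^ orderOf σ) x := rfl
      rw [this, pow_orderOf_eq_one]
      rfl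
    have hk : 0 < k := Function.minimalPeriod_pos_of_mem_periodicPts hper
    have hfix : (σ^k) x = x := Function.iterate_minimalPeriod
    have hxmem : x ∈ clist σ x k := (mem_clist σ x x k).mpr ⟨0, hk, by rw [pow_zero]; rfl⟩
    set p : ι → Prop := fun y => y ∈ clist σ x k with hpdef
    haveI : DecidablePred p := fun y => List.instDecidableMemOfLawfulBEq _ _
    have hclosed : ∀ y, ¬ p y ↔ ¬ p (σ y) := fun y => not_iff_not.mpr (clist_closed σ x k hk hfix y)
    set σ' : Equiv.Perm {y // ¬ p y} := σ.subtypePerm (fun y => (hclosed y).symm) with hσ'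
    have hcard' : Fintype.card {y // ¬ p y} < n := by
      rw [← hcard]
      exact Fintype.card_subtype_lt (x := x) (by simpa [hpdef] using hxmem)
    obtain ⟨pts', h1', h2', h3'⟩ := IH _ hcard' {y // ¬ p y} rfl σ'
    have hlift : (pts'.map fun q => ((q.1 : ι), q.2)).flatMap (fun q => clist σ q.1 q.2)
        = (pts'.flatMap fun q => clist σ' q.1 q.2).map Subtype.val := by
      rw [List.flatMap_map, List.map_flatMap]
      congr 1
      funext q
      exact (clist_subtype σ (fun y => ¬ p y) hclosed q.1 q.2).symm
    refine ⟨(x, k) :: pts'.map (fun q => ((q.1 : ι), q.2)), ?_, ?_, ?_⟩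
    · intro q hq0
      rcases List.mem_cons.mp hq0 with rfl | hq
      · exact ⟨hk, hfix⟩
      · obtain ⟨q', hq', rfl⟩ := List.mem_map.mp hq
        obtain ⟨hpos, hfix'⟩ := h1' q' hq'
        refine ⟨hpos, ?_⟩
        have := congrArg Subtype.val hfix'
        rw [hσ', Equiv.Perm.subtypePerm_pow, Equiv.Perm.subtypePerm_apply] at this
        exact this
    · rw [List.flatMap_cons, hlift]
      refine List.Nodup.append ?_ (h2'.map Subtype.val_injective) ?_
      · exact hkdef ▸ clist_nodup_minimal σ x
      · intro a ha hb
        obtain ⟨a', _, rfl⟩ := List.mem_map.mp hb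
        exact a'.2 ha
    · intro y
      rw [List.flatMap_cons, List.mem_append]
      by_cases hy : p y
      · exact Or.inl hy
      · refine Or.inr ?_
        rw [hlift]
        exact List.mem_map.mpr ⟨⟨y, hy⟩, h3' ⟨y, hy⟩, rfl⟩

end WUniv

namespace WUniv

lemma WS_inst_congr {N : ℕ} {ι : Type} (F1 F2 : Fintype ι) (D1 D2 : DecidableEq ι)
    (s : List ι) (σ : ι → ι) : @WS N ι F1 D1 s σ = @WS N ι F2 D2 s σ := by
  cases Subsingleton.elim F1 F2
  cases Subsingleton.elim D1 D2
  rfl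

set_option maxHeartbeats 1000000 in
theorem eval_cycles : ∀ (r : ℕ) (ι : Type) [Fintype ι] [DecidableEq ι] (σ : Equiv.Perm ι)
    (pts : List (ι × ℕ)), pts.length = r →
    (∀ q ∈ pts, 0 < q.2 ∧ (σ^q.2) q.1 = q.1) →
    (pts.flatMap fun q => clist σ q.1 q.2).Nodup →
    (∀ y : ι, y ∈ pts.flatMap fun q => clist σ q.1 q.2) →
    ∀ N : ℕ, WS N ι (pts.flatMap fun q => clist σ q.1 q.2) ⇑σ
      = (pts.map fun q => casimir N q.2).prod := by
  intro r
  induction r with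
  | zero =>
    intro ι _ _ σ pts hlen _ _ hcompl N
    have hnil : pts = [] := List.length_eq_zero_iff.mp hlen
    subst hnil
    haveI : IsEmpty ι := ⟨fun y => by simpa using hcompl y⟩
    haveI : Unique (ι → Fin N) :=
      ⟨⟨fun y => isEmptyElim y⟩, fun f => funext fun y => isEmptyElim y⟩
    unfold WS
    simp
  | succ r ih =>
    intro ι _ _ σ pts hlen hconds hnd hcompl N
    obtain ⟨⟨x, k⟩, pts', rfl⟩ : ∃ q pts', pts = q :: pts' := by
      cases pts with
      | nil => simp at hlen
      | cons q t => exact ⟨q, t, rfl⟩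
    obtain ⟨hk, hfix⟩ := hconds (x, k) (List.mem_cons_self)
    set p : ι → Prop := fun y => y ∈ clist σ x k with hp
    haveI : DecidablePred p := fun y => List.instDecidableMemOfLawfulBEq _ _
    have hclosed : ∀ y, p y ↔ p (σ y) := clist_closed σ x k hk hfix
    have hclosedn : ∀ y, ¬ p y ↔ ¬ p (σ y) := fun y => not_iff_not.mpr (hclosed y)
    rw [List.flatMap_cons] at hnd hcompl ⊢
    obtain ⟨hnd1, hnd2, hdisj⟩ := List.nodup_append.mp hnd
    set rest := pts'.flatMap (fun q => clist σ q.1 q.2) with hrest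
    have hrestnp : ∀ y ∈ rest, ¬ p y := fun y hy hyp => hdisj y hyp y hy rfl
    have hmemc : ∀ j : Fin k, p ((σ^(j:ℕ)) x) := fun j => (mem_clist σ x _ k).mpr ⟨j, j.2, rfl⟩
    set s₁ : List {y // p y} := List.ofFn (fun j : Fin k => ⟨(σ^(j:ℕ)) x, hmemc j⟩) with hs₁
    set s₂ : List {y // ¬ p y} := rest.pmap (fun y h => ⟨y, h⟩) hrestnp with hs₂
    have hmap1 : s₁.map Subtype.val = clist σ x k := by
      rw [hs₁, List.map_ofFn]; rfl
    have hmap2 : s₂.map Subtype.val = rest := by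
      rw [hs₂, List.map_pmap]
      exact (List.pmap_eq_map (f := fun a => a) _).trans (List.map_id _)
    set σ₁ : Equiv.Perm {y // p y} := σ.subtypePerm (fun y => (hclosed y).symm) with hσ₁
    set σ₂ : Equiv.Perm {y // ¬ p y} := σ.subtypePerm (fun y => (hclosedn y).symm) with hσ₂
    have hsplit := WS_split N p s₁ s₂ ⇑σ ⇑σ₁ ⇑σ₂ (fun z _ => rfl) (fun z _ => rfl)
    rw [hmap1, hmap2] at hsplit
    rw [hsplit, List.map_cons, List.prod_cons]
    congr 1
    · -- first factor is the casimir
      obtain ⟨k', rfl⟩ : ∃ k', k = k' + 1 := ⟨k-1, by omega⟩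
      have hinjfull : Function.Injective (fun j : Fin (k'+1) => (σ^(j:ℕ)) x) :=
        List.nodup_ofFn.mp hnd1
      have hinj : Function.Injective
          (fun j : Fin (k'+1) => (⟨(σ^(j:ℕ)) x, hmemc j⟩ : {y // p y})) := by
        intro a b hab
        exact hinjfull (congrArg Subtype.val hab)
      have hsurj : Function.Surjective
          (fun j : Fin (k'+1) => (⟨(σ^(j:ℕ)) x, hmemc j⟩ : {y // p y})) := by
        rintro ⟨y, hy⟩
        obtain ⟨j, hj, hje⟩ := (mem_clist σ x y (k'+1)).mp hy
        exact ⟨⟨j, hj⟩, Subtype.ext hje⟩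
      set e : Fin (k'+1) ≃ {y // p y} := Equiv.ofBijective _ ⟨hinj, hsurj⟩ with he
      have hcomm : ∀ j ∈ List.finRange (k'+1), σ₁ (e j) = e (finRotate (k'+1) j) := by
        intro j _
        apply Subtype.ext
        show σ ((σ^(j:ℕ)) x) = (σ^((finRotate (k'+1) j : ℕ))) x
        have hL : σ ((σ^(j:ℕ)) x) = (σ^((j:ℕ)+1)) x := by rw [pow_succ']; rfl
        rw [hL, finRotate_succ_apply, Fin.val_add_one]
        by_cases hlast : j = Fin.last k'
        · rw [if_pos hlast, pow_zero]
          subst hlast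
          rw [Fin.val_last, hfix]
          rfl
        · rw [if_neg hlast]
      have h1 := WS_relabel N e (List.finRange (k'+1)) ⇑σ₁ ⇑(finRotate (k'+1)) hcomm
      rw [← casimir_eq_WS] at h1
      rw [← h1]
      rw [hs₁, List.ofFn_eq_map]
      exact WS_inst_congr _ _ _ _ _ _
    · -- second factor
      have hq1 : ∀ q ∈ pts', ¬ p q.1 := by
        intro q hq
        apply hrestnp
        rw [hrest]
        refine List.mem_flatMap.mpr ⟨q, hq, (mem_clist σ q.1 q.1 q.2).mpr
          ⟨0, (hconds q (List.mem_cons_of_mem _ hq)).1, by rw [pow_zero]; rfl⟩⟩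
      set pts'' : List ({y // ¬ p y} × ℕ) := pts'.pmap (fun (q : ι × ℕ) (h : ¬ p q.1) => ((⟨q.1, h⟩ : {y // ¬ p y}), q.2)) hq1 with hpts''
      have hliftgen : ∀ (l : List (ι × ℕ)) (hl : ∀ q ∈ l, ¬ p q.1),
          ((l.pmap (fun (q : ι × ℕ) (h : ¬ p q.1) => ((⟨q.1, h⟩ : {y // ¬ p y}), q.2)) hl).flatMap
            (fun q => clist σ₂ q.1 q.2)).map Subtype.val
          = l.flatMap fun q => clist σ q.1 q.2 := by
        intro l
        induction l with
        | nil => intro _; rfl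
        | cons a t iht =>
          intro hl
          show List.map Subtype.val ((((⟨a.1, hl a (List.mem_cons_self (a := a) (l := t))⟩ : {y // ¬ p y}), a.2)
              :: (List.pmap _ t (fun q hq => hl q (List.mem_cons_of_mem a hq)))).flatMap
              (fun q => clist σ₂ q.1 q.2)) = _
          rw [List.flatMap_cons, List.flatMap_cons, List.map_append, iht _]
          congr 1
          exact clist_subtype σ (fun y => ¬ p y) hclosedn ⟨a.1, hl a (List.mem_cons_self (a := a) (l := t))⟩ a.2
      have hlift : (pts''.flatMap fun q => clist σ₂ q.1 q.2).map Subtype.val = rest :=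
        hliftgen pts' hq1
      have hcond'' : ∀ q ∈ pts'', 0 < q.2 ∧ (σ₂^q.2) q.1 = q.1 := by
        intro q hq
        obtain ⟨q', hq', hfq⟩ := List.mem_pmap.mp hq
        obtain ⟨hpos, hfix'⟩ := hconds q' (List.mem_cons_of_mem _ hq')
        subst hfq
        refine ⟨hpos, Subtype.ext ?_⟩
        rw [hσ₂, Equiv.Perm.subtypePerm_pow, Equiv.Perm.subtypePerm_apply]
        exact hfix'
      have hnd'' : (pts''.flatMap fun q => clist σ₂ q.1 q.2).Nodup := by
        have := hlift ▸ hnd2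
        exact this.of_map Subtype.val
      have hcompl'' : ∀ y : {y // ¬ p y}, y ∈ pts''.flatMap fun q => clist σ₂ q.1 q.2 := by
        intro y
        have hy := hcompl (y : ι)
        rcases List.mem_append.mp hy with hy1 | hy2
        · exact absurd hy1 y.2
        · rw [← hlift] at hy2
          obtain ⟨z, hz, hval⟩ := List.mem_map.mp hy2
          rwa [Subtype.val_injective hval] at hz
      have hlen'' : pts''.length = r := by
        rw [hpts'', List.length_pmap]
        simpa using hlen
      have hs2eq : s₂ = pts''.flatMap fun q => clist σ₂ q.1 q.2 := by
        refine List.map_injective_iff.mpr Subtype.val_injective ?_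
        rw [hmap2, hlift]
      have hIH := ih {y // ¬ p y} σ₂ pts'' hlen'' hcond'' hnd'' hcompl'' N
      rw [hs2eq, hIH]
      rw [hpts'', List.map_pmap]
      exact congrArg List.prod (List.pmap_eq_map (f := fun q : ι × ℕ => casimir N q.2) _)

end WUniv

namespace WUniv

lemma iota_comm (N : ℕ) (u v : gl N) :
    ιgl N u * ιgl N v = ιgl N v * ιgl N u + ιgl N (u * v - v * u) := by
  have h : ιgl N u * ιgl N v - ιgl N v * ιgl N u = ιgl N (⁅u, v⁆) := by
    rw [← Ring.lie_def, ιgl, ιgl, ιgl, ← LieHom.map_lie]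
  rw [Ring.lie_def] at h
  linear_combination (norm := noncomm_ring) h

lemma E_mul (N : ℕ) (x y z w : Fin N) :
    (E x y : gl N) * E z w = if y = z then E x w else 0 := by
  by_cases h : y = z
  · subst h
    rw [if_pos rfl]
    exact (Matrix.single_mul_single_same x y w (c := (1:ℂ)) 1).trans (by rw [one_mul]; rfl)
  · rw [if_neg h]
    exact Matrix.single_mul_single_of_ne x y z (c := (1:ℂ)) h 1

lemma E_comm (N : ℕ) (x y z w : Fin N) :
    ιgl N (E x y) * ιgl N (E z w)
      = ιgl N (E z w) * ιgl N (E x y)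
        + (if y = z then ιgl N (E x w) else 0) - (if w = x then ιgl N (E z y) else 0) := by
  rw [iota_comm, E_mul, E_mul]
  have hm : ιgl N ((if y = z then E x w else 0) - (if w = x then E z y else 0))
      = (if y = z then ιgl N (E x w) else 0) - (if w = x then ιgl N (E z y) else 0) := by
    rw [ιgl, map_sub]
    congr 1 <;> split_ifs <;> simp [ιgl]
  rw [hm, add_sub_assoc]

noncomputable def Corr (N : ℕ) (ι : Type) [Fintype ι] [DecidableEq ι] (b c : ι)
    (s : List ι) (g : ι → ι) : UniversalEnvelopingAlgebra ℂ (gl N) :=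
  ∑ i : ι → Fin N, if i b = i c then (s.map fun z => ιgl N (E (i z) (i (g z)))).prod else 0

lemma Corr_congr (N : ℕ) {ι : Type} [Fintype ι] [DecidableEq ι] (b c : ι)
    (s : List ι) (g g' : ι → ι)
    (h : ∀ z ∈ s, g' z = g z ∨ (g z = c ∧ g' z = b)) :
    Corr N ι b c s g = Corr N ι b c s g' := by
  unfold Corr
  refine Finset.sum_congr rfl fun i _ => ?_
  by_cases hbc : i b = i c
  · rw [if_pos hbc, if_pos hbc]
    refine congrArg List.prod (List.map_congr_left fun z hz => ?_)
    rcases h z hz with h1 | ⟨h1, h2⟩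
    · rw [h1]
    · rw [h1, h2, hbc]
  · rw [if_neg hbc, if_neg hbc]

lemma Corr_eq_ne (N : ℕ) {ι : Type} [Fintype ι] [DecidableEq ι] (b c : ι) (hbc : b ≠ c)
    (s : List ι) (hcs : ∀ z ∈ s, z ≠ c) (g : ι → ι) (g' : {x // x ≠ c} → {x // x ≠ c})
    (hg : ∀ z : {x // x ≠ c}, (z : ι) ∈ s → ((g' z : ι)) = g (z : ι)) :
    Corr N ι b c s g = WS N {x // x ≠ c} (s.pmap (fun z h => ⟨z, h⟩) hcs) g' := by
  unfold Corr WS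
  rw [← Equiv.sum_comp (Equiv.funSplitAt c (Fin N)).symm
    (fun i => if i b = i c then (s.map fun z => ιgl N (E (i z) (i (g z)))).prod else 0),
    Fintype.sum_prod_type]
  have hib : ∀ (x : Fin N × ({j // j ≠ c} → Fin N)),
      (Equiv.funSplitAt c (Fin N)).symm x b = x.2 ⟨b, hbc⟩ := by
    intro x
    simp [Equiv.funSplitAt, Equiv.piSplitAt, hbc]
  have hic : ∀ (x : Fin N × ({j // j ≠ c} → Fin N)),
      (Equiv.funSplitAt c (Fin N)).symm x c = x.1 := by
    intro x
    simp [Equiv.funSplitAt, Equiv.piSplitAt]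
  rw [Finset.sum_comm]
  refine Finset.sum_congr rfl fun j _ => ?_
  rw [show (∑ v : Fin N, if (Equiv.funSplitAt c (Fin N)).symm (v, j) b
        = (Equiv.funSplitAt c (Fin N)).symm (v, j) c
      then ((s.map fun z => ιgl N (E ((Equiv.funSplitAt c (Fin N)).symm (v, j) z)
        ((Equiv.funSplitAt c (Fin N)).symm (v, j) (g z)))).prod) else 0)
    = ∑ v : Fin N, if j ⟨b, hbc⟩ = v
      then ((s.map fun z => ιgl N (E ((Equiv.funSplitAt c (Fin N)).symm (v, j) z)
        ((Equiv.funSplitAt c (Fin N)).symm (v, j) (g z)))).prod) else 0 from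
    Finset.sum_congr rfl fun v _ => by rw [hib (v, j), hic (v, j), eq_comm]]
  rw [Finset.sum_ite_eq]
  rw [if_pos (Finset.mem_univ _)]
  rw [List.map_pmap]
  set i0 := (Equiv.funSplitAt c (Fin N)).symm (j ⟨b, hbc⟩, j) with hi0
  have hival : ∀ (z : ι) (hz : z ≠ c), i0 z = j ⟨z, hz⟩ := by
    intro z hz
    rw [hi0]
    simp [Equiv.funSplitAt, Equiv.piSplitAt, hz]
  refine congrArg List.prod ?_
  have := List.pmap_congr_left (p := fun z => z ∈ s) (q := fun z => z ≠ c)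
    (f := fun z _ => ιgl N (E (i0 z) (i0 (g z))))
    (g := fun z h => ιgl N (E (j ⟨z, h⟩) (j (g' ⟨z, h⟩)))) s
    (H₁ := fun a ha => ha) (H₂ := hcs) ?_
  · rw [← this, List.pmap_eq_map]
  · intro z hz h1 h2
    have hgz : g z = (g' ⟨z, h2⟩ : ι) := (hg ⟨z, h2⟩ hz).symm
    show ιgl N (E (i0 z) (i0 (g z))) = ιgl N (E (j ⟨z, h2⟩) (j (g' ⟨z, h2⟩)))
    rw [hival z h2, hgz, hival _ (g' ⟨z, h2⟩).2]

lemma Corr_eq_eq (N : ℕ) {ι : Type} [Fintype ι] [DecidableEq ι] (c : ι)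
    (s : List ι) (hcs : ∀ z ∈ s, z ≠ c) (g : ι → ι) (g' : {x // x ≠ c} → {x // x ≠ c})
    (hg : ∀ z : {x // x ≠ c}, (z : ι) ∈ s → ((g' z : ι)) = g (z : ι)) :
    Corr N ι c c s g = (N : UniversalEnvelopingAlgebra ℂ (gl N))
      * WS N {x // x ≠ c} (s.pmap (fun z h => ⟨z, h⟩) hcs) g' := by
  unfold Corr WS
  rw [← Equiv.sum_comp (Equiv.funSplitAt c (Fin N)).symm
    (fun i => if i c = i c then (s.map fun z => ιgl N (E (i z) (i (g z)))).prod else 0),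
    Fintype.sum_prod_type, Finset.sum_comm]
  rw [Finset.mul_sum]
  refine Finset.sum_congr rfl fun j _ => ?_
  have hival : ∀ (v : Fin N) (z : ι) (hz : z ≠ c),
      (Equiv.funSplitAt c (Fin N)).symm (v, j) z = j ⟨z, hz⟩ := by
    intro v z hz
    simp [Equiv.funSplitAt, Equiv.piSplitAt, hz]
  have hterm : ∀ v : Fin N,
      (if (Equiv.funSplitAt c (Fin N)).symm (v, j) c = (Equiv.funSplitAt c (Fin N)).symm (v, j) c
      then ((s.map fun z => ιgl N (E ((Equiv.funSplitAt c (Fin N)).symm (v, j) z)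
        ((Equiv.funSplitAt c (Fin N)).symm (v, j) (g z)))).prod) else 0)
      = ((s.pmap (fun z h => ⟨z, h⟩) hcs).map
          fun z => ιgl N (E (j z) (j (g' z)))).prod := by
    intro v
    rw [if_pos rfl, List.map_pmap]
    refine congrArg List.prod ?_
    have := List.pmap_congr_left (p := fun z => z ∈ s) (q := fun z => z ≠ c)
      (f := fun z _ => ιgl N (E ((Equiv.funSplitAt c (Fin N)).symm (v, j) z)
        ((Equiv.funSplitAt c (Fin N)).symm (v, j) (g z))))
      (g := fun z h => ιgl N (E (j ⟨z, h⟩) (j (g' ⟨z, h⟩)))) s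
      (H₁ := fun a ha => ha) (H₂ := hcs) ?_
    · rw [← this, List.pmap_eq_map]
    · intro z hz h1 h2
      have hgz : g z = (g' ⟨z, h2⟩ : ι) := (hg ⟨z, h2⟩ hz).symm
      show ιgl N (E ((Equiv.funSplitAt c (Fin N)).symm (v, j) z)
          ((Equiv.funSplitAt c (Fin N)).symm (v, j) (g z)))
        = ιgl N (E (j ⟨z, h2⟩) (j (g' ⟨z, h2⟩)))
      rw [hival v z h2, hgz, hival v _ (g' ⟨z, h2⟩).2]
  rw [Finset.sum_congr rfl fun v _ => hterm v, Finset.sum_const, Finset.card_univ,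
    Fintype.card_fin, nsmul_eq_mul]

end WUniv

namespace WUniv

lemma mul_ite_zero {R : Type} [Ring R] (P Q : R) (cnd : Prop) [Decidable cnd] (Z : R) :
    P * ((if cnd then Z else 0) * Q) = if cnd then P * (Z * Q) else 0 := by
  split_ifs
  · rfl
  · rw [zero_mul, mul_zero]

lemma swap_core_alg {R : Type} [Ring R] (P Q A B X Y : R) (h : A * B = B * A + X - Y) :
    P * (A * (B * Q)) = P * (B * (A * Q)) + P * (X * Q) - P * (Y * Q) := by
  rw [show A * (B * Q) = (A * B) * Q from (mul_assoc _ _ _).symm, h]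
  noncomm_ring

lemma WS_swap_core (N : ℕ) {ι : Type} [Fintype ι] [DecidableEq ι] (σ : ι → ι)
    (p q : List ι) (a c : ι) (hap : a ∉ p) (haq : a ∉ q) (hcp : c ∉ p) (hcq : c ∉ q) :
    WS N ι (p ++ a :: c :: q) σ
      = WS N ι (p ++ c :: a :: q) σ
        + Corr N ι (σ a) c (p ++ a :: q) (Function.update σ a (σ c))
        - Corr N ι (σ c) a (p ++ c :: q) (Function.update σ c (σ a)) := by
  unfold WS Corr
  rw [← Finset.sum_add_distrib, ← Finset.sum_sub_distrib]
  refine Finset.sum_congr rfl fun i _ => ?_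
  set f : ι → UniversalEnvelopingAlgebra ℂ (gl N) :=
    fun z => ιgl N (E (i z) (i (σ z))) with hf
  have hWa : (List.map f (p ++ a :: c :: q)).prod
      = (p.map f).prod * (f a * (f c * (q.map f).prod)) := by
    rw [List.map_append, List.prod_append, List.map_cons, List.map_cons,
      List.prod_cons, List.prod_cons]
  have hWc : (List.map f (p ++ c :: a :: q)).prod
      = (p.map f).prod * (f c * (f a * (q.map f).prod)) := by
    rw [List.map_append, List.prod_append, List.map_cons, List.map_cons,
      List.prod_cons, List.prod_cons]
  have hw1 : (List.map (fun z => ιgl N (E (i z) (i (Function.update σ a (σ c) z))))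
        (p ++ a :: q)).prod
      = (p.map f).prod * (ιgl N (E (i a) (i (σ c))) * (q.map f).prod) := by
    rw [List.map_append, List.map_cons, List.prod_append, List.prod_cons]
    have e1 : List.map (fun z => ιgl N (E (i z) (i (Function.update σ a (σ c) z)))) p
        = List.map f p := List.map_congr_left fun z hz => by
      rw [Function.update_of_ne (fun h => hap (by rwa [h] at hz)) _ _]
    have e2 : List.map (fun z => ιgl N (E (i z) (i (Function.update σ a (σ c) z)))) q
        = List.map f q := List.map_congr_left fun z hz => by
      rw [Function.update_of_ne (fun h => haq (by rwa [h] at hz)) _ _]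
    rw [e1, e2, Function.update_self]
  have hw2 : (List.map (fun z => ιgl N (E (i z) (i (Function.update σ c (σ a) z))))
        (p ++ c :: q)).prod
      = (p.map f).prod * (ιgl N (E (i c) (i (σ a))) * (q.map f).prod) := by
    rw [List.map_append, List.map_cons, List.prod_append, List.prod_cons]
    have e1 : List.map (fun z => ιgl N (E (i z) (i (Function.update σ c (σ a) z)))) p
        = List.map f p := List.map_congr_left fun z hz => by
      rw [Function.update_of_ne (fun h => hcp (by rwa [h] at hz)) _ _]
    have e2 : List.map (fun z => ιgl N (E (i z) (i (Function.update σ c (σ a) z)))) q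
        = List.map f q := List.map_congr_left fun z hz => by
      rw [Function.update_of_ne (fun h => hcq (by rwa [h] at hz)) _ _]
    rw [e1, e2, Function.update_self]
  rw [hWa, hWc, hw1, hw2]
  rw [← mul_ite_zero ((p.map f).prod) ((q.map f).prod) _ (ιgl N (E (i a) (i (σ c)))),
    ← mul_ite_zero ((p.map f).prod) ((q.map f).prod) _ (ιgl N (E (i c) (i (σ a))))]
  exact swap_core_alg _ _ _ _ _ _ (E_comm N (i a) (i (σ a)) (i c) (i (σ c)))

lemma Corr_good {m n : ℕ} {ι : Type} [Fintype ι] [DecidableEq ι]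
    (OIH : ∀ (κ : Type) [Fintype κ] [DecidableEq κ] (τ : Equiv.Perm κ) (s : List κ),
      s.Nodup → (∀ x, x ∈ s) → s.length < n → Good m (fun N => WS N κ s ⇑τ))
    (b c : ι) (s' : List ι) (hnd : s'.Nodup) (hcomp : ∀ x : ι, x ≠ c → x ∈ s')
    (hcs : ∀ z ∈ s', z ≠ c) (hlen : s'.length < n)
    (τ : Equiv.Perm ι) (hτc : τ c = c) (g : ι → ι)
    (hgτ : ∀ z ∈ s', (⇑τ) z = g z ∨ (g z = c ∧ (⇑τ) z = b)) :
    Good m (fun N => Corr N ι b c s' g) := by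
  have hiff : ∀ x : ι, x ≠ c ↔ τ x ≠ c := by
    intro x
    constructor
    · intro hx h
      exact hx (τ.injective (h.trans hτc.symm))
    · intro hx h
      exact hx (h ▸ hτc)
  set τ' : Equiv.Perm {x // x ≠ c} := τ.subtypePerm (fun x => (hiff x).symm) with hτ'
  set s'' : List {x // x ≠ c} := s'.pmap (fun z h => ⟨z, h⟩) hcs with hs''
  have hnd'' : s''.Nodup := hnd.pmap (fun a _ b _ h => congrArg Subtype.val h)
  have hcomp'' : ∀ y : {x // x ≠ c}, y ∈ s'' := by
    intro y
    rw [hs'']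
    exact List.mem_pmap.mpr ⟨y.1, hcomp y.1 y.2, rfl⟩
  have hlen'' : s''.length < n := by
    rw [hs'', List.length_pmap]
    exact hlen
  have hG := OIH {x // x ≠ c} τ' s'' hnd'' hcomp'' hlen''
  have hcongr : ∀ N, Corr N ι b c s' g = Corr N ι b c s' ⇑τ :=
    fun N => (Corr_congr N b c s' g ⇑τ hgτ).symm ▸ rfl
  by_cases hbc : b = c
  · subst hbc
    have heq : ∀ N, Corr N ι b b s' g
        = (N : UniversalEnvelopingAlgebra ℂ (gl N)) * WS N {x // x ≠ b} s'' ⇑τ' := by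
      intro N
      rw [Corr_congr N b b s' g ⇑τ hgτ]
      exact Corr_eq_eq N b s' hcs ⇑τ ⇑τ' (fun z _ => rfl)
    obtain ⟨P, hP⟩ := hG.natmul
    exact ⟨P, fun N hN => by show Corr N ι b b s' g = _; rw [heq N]; exact hP N hN⟩
  · have heq : ∀ N, Corr N ι b c s' g = WS N {x // x ≠ c} s'' ⇑τ' := by
      intro N
      rw [Corr_congr N b c s' g ⇑τ hgτ]
      exact Corr_eq_ne N b c hbc s' hcs ⇑τ ⇑τ' (fun z _ => rfl)
    obtain ⟨P, hP⟩ := hG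
    exact ⟨P, fun N hN => by show Corr N ι b c s' g = _; rw [heq N]; exact hP N hN⟩

end WUniv

namespace WUniv

lemma Good.zero {m : ℕ} : Good m (fun N => (0 : UniversalEnvelopingAlgebra ℂ (gl N))) :=
  ⟨0, fun N _ => by simp [evalAtCasimirs_def]⟩

lemma Good.congr {m : ℕ} {f g : (N : ℕ) → UniversalEnvelopingAlgebra ℂ (gl N)}
    (hf : Good m f) (h : ∀ N, 1 ≤ N → g N = f N) : Good m g := by
  obtain ⟨P, hP⟩ := hf
  exact ⟨P, fun N hN => (h N hN).trans (hP N hN)⟩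

set_option maxHeartbeats 1000000 in
theorem main (m : ℕ) : ∀ (n : ℕ), n ≤ m → ∀ (ι : Type) [Fintype ι] [DecidableEq ι]
    (σ : Equiv.Perm ι) (s : List ι), s.Nodup → (∀ x, x ∈ s) → s.length = n →
    Good m (fun N => WS N ι s ⇑σ) := by
  intro n
  induction n using Nat.strong_induction_on with
  | _ n IH =>
  intro hn ι _ _ σ s hnd hcomp hlen
  have OIH : ∀ (κ : Type) [Fintype κ] [DecidableEq κ] (τ : Equiv.Perm κ) (t : List κ),
      t.Nodup → (∀ x, x ∈ t) → t.length < n → Good m (fun N => WS N κ t ⇑τ) := by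
    intro κ _ _ τ t h1 h2 h3
    exact IH t.length h3 ((lt_of_lt_of_le h3 hn).le) κ τ t h1 h2 rfl
  set R : List ι → List ι → Prop :=
    fun L1 L2 => Good m (fun N => WS N ι L1 ⇑σ - WS N ι L2 ⇑σ) with hR
  have Rrefl : ∀ L, R L L := fun L => Good.zero.congr (fun N _ => sub_self _)
  have Rtrans : ∀ {L1 L2 L3}, R L1 L2 → R L2 L3 → R L1 L3 := by
    intro L1 L2 L3 h1 h2
    exact (h1.add h2).congr (fun N _ => by abel)
  have Rswap : ∀ (p q : List ι) (a c : ι), (p ++ a :: c :: q).Perm s →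
      R (p ++ a :: c :: q) (p ++ c :: a :: q) := by
    intro p q a c hperm
    have hnd2 : (p ++ a :: c :: q).Nodup := hperm.nodup_iff.mpr hnd
    have hcomp2 : ∀ x : ι, x ∈ p ++ a :: c :: q := fun x => hperm.mem_iff.mpr (hcomp x)
    have hlen2 : (p ++ a :: c :: q).length = n := by rw [hperm.length_eq, hlen]
    obtain ⟨hpnd, hcnd, hdisj⟩ := List.nodup_append.mp hnd2
    have hacq := List.nodup_cons.mp hcnd
    have hac : a ≠ c := fun h => hacq.1 (h ▸ List.mem_cons_self (a := c) (l := q))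
    have haq : a ∉ q := fun h => hacq.1 (List.mem_cons_of_mem c h)
    have hcq : c ∉ q := (List.nodup_cons.mp hacq.2).1
    have hap : a ∉ p := fun h => hdisj a h a List.mem_cons_self rfl
    have hcp : c ∉ p := fun h => hdisj c h c (List.mem_cons_of_mem a (List.mem_cons_self (a := c) (l := q))) rfl
    set τ₁ : Equiv.Perm ι := (Equiv.swap c (σ a)) * σ * (Equiv.swap a c) with hτ₁
    have hτ₁app : ∀ z, τ₁ z = Equiv.swap c (σ a) (σ (Equiv.swap a c z)) := fun z => rfl
    have hτ₁c : τ₁ c = c := by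
      rw [hτ₁app, Equiv.swap_apply_right, Equiv.swap_apply_right]
    have hs1nd : (p ++ a :: q).Nodup :=
      hnd2.sublist (((List.sublist_cons_self c q).cons₂ a).append_left p)
    have hs1comp : ∀ x : ι, x ≠ c → x ∈ p ++ a :: q := by
      intro x hx
      rcases List.mem_append.mp (hcomp2 x) with h | h
      · exact List.mem_append.mpr (Or.inl h)
      · rcases List.mem_cons.mp h with rfl | h
        · exact List.mem_append.mpr (Or.inr (List.mem_cons_self))
        · rcases List.mem_cons.mp h with rfl | h
          · exact absurd rfl hx
          · exact List.mem_append.mpr (Or.inr (List.mem_cons_of_mem _ h))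
    have hs1ne : ∀ z ∈ p ++ a :: q, z ≠ c := by
      intro z hz
      rcases List.mem_append.mp hz with h | h
      · exact fun he => hcp (he ▸ h)
      · rcases List.mem_cons.mp h with rfl | h
        · exact hac
        · exact fun he => hcq (he ▸ h)
    have hs1len : (p ++ a :: q).length < n := by
      rw [← hlen2]
      simp only [List.length_append, List.length_cons]
      omega
    have hg₁ : ∀ z ∈ p ++ a :: q, (⇑τ₁) z = Function.update (⇑σ) a (σ c) z ∨
        (Function.update (⇑σ) a (σ c) z = c ∧ (⇑τ₁) z = σ a) := by
      intro z hz
      by_cases hza : z = a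
      · subst hza
        rw [Function.update_self]
        have ht : τ₁ z = Equiv.swap c (σ z) (σ c) := by
          rw [hτ₁app, Equiv.swap_apply_left]
        by_cases hσc : σ c = c
        · exact Or.inr ⟨hσc, by rw [ht, hσc, Equiv.swap_apply_left]⟩
        · refine Or.inl ?_
          rw [ht, Equiv.swap_apply_of_ne_of_ne hσc (fun h => hac (σ.injective h).symm)]
      · have hzc : z ≠ c := hs1ne z hz
        rw [Function.update_of_ne hza]
        have ht : τ₁ z = Equiv.swap c (σ a) (σ z) := by
          rw [hτ₁app, Equiv.swap_apply_of_ne_of_ne hza hzc]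
        by_cases h1 : σ z = c
        · exact Or.inr ⟨h1, by rw [ht, h1, Equiv.swap_apply_left]⟩
        · refine Or.inl ?_
          rw [ht, Equiv.swap_apply_of_ne_of_ne h1 (fun h => hza (σ.injective h))]
    have hG1 : Good m (fun N =>
        Corr N ι (σ a) c (p ++ a :: q) (Function.update (⇑σ) a (σ c))) :=
      Corr_good (n := n) OIH (σ a) c (p ++ a :: q) hs1nd hs1comp hs1ne hs1len τ₁ hτ₁c _ hg₁
    set τ₂ : Equiv.Perm ι := (Equiv.swap a (σ c)) * σ * (Equiv.swap c a) with hτ₂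
    have hτ₂app : ∀ z, τ₂ z = Equiv.swap a (σ c) (σ (Equiv.swap c a z)) := fun z => rfl
    have hτ₂a : τ₂ a = a := by
      rw [hτ₂app, Equiv.swap_apply_right, Equiv.swap_apply_right]
    have hs2nd : (p ++ c :: q).Nodup :=
      hnd2.sublist ((List.sublist_cons_self a (c :: q)).append_left p)
    have hs2comp : ∀ x : ι, x ≠ a → x ∈ p ++ c :: q := by
      intro x hx
      rcases List.mem_append.mp (hcomp2 x) with h | h
      · exact List.mem_append.mpr (Or.inl h)
      · rcases List.mem_cons.mp h with rfl | h
        · exact absurd rfl hx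
        · exact List.mem_append.mpr (Or.inr h)
    have hs2ne : ∀ z ∈ p ++ c :: q, z ≠ a := by
      intro z hz
      rcases List.mem_append.mp hz with h | h
      · exact fun he => hap (he ▸ h)
      · rcases List.mem_cons.mp h with rfl | h
        · exact hac.symm
        · exact fun he => haq (he ▸ h)
    have hs2len : (p ++ c :: q).length < n := by
      rw [← hlen2]
      simp only [List.length_append, List.length_cons]
      omega
    have hg₂ : ∀ z ∈ p ++ c :: q, (⇑τ₂) z = Function.update (⇑σ) c (σ a) z ∨
        (Function.update (⇑σ) c (σ a) z = a ∧ (⇑τ₂) z = σ c) := by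
      intro z hz
      by_cases hzc : z = c
      · subst hzc
        rw [Function.update_self]
        have ht : τ₂ z = Equiv.swap a (σ z) (σ a) := by
          rw [hτ₂app, Equiv.swap_apply_left]
        by_cases hσa : σ a = a
        · exact Or.inr ⟨hσa, by rw [ht, hσa, Equiv.swap_apply_left]⟩
        · refine Or.inl ?_
          rw [ht, Equiv.swap_apply_of_ne_of_ne hσa (fun h => hac (σ.injective h))]
      · have hza : z ≠ a := hs2ne z hz
        rw [Function.update_of_ne hzc]
        have ht : τ₂ z = Equiv.swap a (σ c) (σ z) := by
          rw [hτ₂app, Equiv.swap_apply_of_ne_of_ne hzc hza]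
        by_cases h1 : σ z = a
        · exact Or.inr ⟨h1, by rw [ht, h1, Equiv.swap_apply_left]⟩
        · refine Or.inl ?_
          rw [ht, Equiv.swap_apply_of_ne_of_ne h1 (fun h => hzc (σ.injective h))]
    have hG2 : Good m (fun N =>
        Corr N ι (σ c) a (p ++ c :: q) (Function.update (⇑σ) c (σ a))) :=
      Corr_good (n := n) OIH (σ c) a (p ++ c :: q) hs2nd hs2comp hs2ne hs2len τ₂ hτ₂a _ hg₂
    exact (hG1.sub hG2).congr (fun N _ => by
      rw [WS_swap_core N ⇑σ p q a c hap haq hcp hcq]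
      abel)
  have Rmove : ∀ (t p q : List ι) (x : ι), (p ++ (t ++ x :: q)).Perm s →
      R (p ++ (t ++ x :: q)) (p ++ x :: (t ++ q)) := by
    intro t
    induction t with
    | nil =>
      intro p q x hperm
      exact Rrefl _
    | cons y t' iht =>
      intro p q x hperm
      have hAeq : p ++ ((y :: t') ++ x :: q) = (p ++ [y]) ++ (t' ++ x :: q) := by simp
      have hpermB : ((p ++ [y]) ++ (t' ++ x :: q)).Perm s := hAeq ▸ hperm
      have step1 := iht (p ++ [y]) q x hpermB
      have hCeq : (p ++ [y]) ++ x :: (t' ++ q) = p ++ y :: x :: (t' ++ q) := by simp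
      have hpermC : (p ++ y :: x :: (t' ++ q)).Perm s := by
        refine List.Perm.trans ?_ hperm
        refine List.Perm.append_left p ?_
        refine List.Perm.cons y ?_
        exact List.perm_middle.symm
      have step2 := Rswap p (t' ++ q) y x hpermC
      have htgt : p ++ x :: ((y :: t') ++ q) = p ++ x :: y :: (t' ++ q) := by simp
      rw [hAeq, htgt]
      refine Rtrans step1 ?_
      rw [hCeq]
      exact step2
  have Rperm : ∀ (t' t p : List ι), t.Perm t' → (p ++ t).Perm s → R (p ++ t) (p ++ t') := by
    intro t'
    induction t' with
    | nil =>
      intro t p h1 h2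
      rw [h1.eq_nil]
      exact Rrefl _
    | cons x u iht =>
      intro t p h1 h2
      have hx : x ∈ t := h1.mem_iff.mpr (List.mem_cons_self (a := x) (l := u))
      obtain ⟨t1, t2, rfl⟩ := List.append_of_mem hx
      have hmv := Rmove t1 p t2 x h2
      have h1' : (t1 ++ t2).Perm u := by
        have hmid : (t1 ++ x :: t2).Perm (x :: (t1 ++ t2)) := List.perm_middle
        exact (List.perm_cons x).mp (hmid.symm.trans h1)
      have hpx : ((p ++ [x]) ++ (t1 ++ t2)).Perm s := by
        have he : (p ++ [x]) ++ (t1 ++ t2) = p ++ (x :: (t1 ++ t2)) := by simp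
        rw [he]
        refine List.Perm.trans ?_ h2
        exact List.Perm.append_left p List.perm_middle.symm
      have step2 := iht (t1 ++ t2) (p ++ [x]) h1' hpx
      have e1 : (p ++ [x]) ++ (t1 ++ t2) = p ++ x :: (t1 ++ t2) := by simp
      have e2 : (p ++ [x]) ++ u = p ++ x :: u := by simp
      rw [e1, e2] at step2
      exact Rtrans hmv step2
  -- canonical sorted cycle word
  obtain ⟨pts, hc1, hc2, hc3⟩ := cyc_decomp (Fintype.card ι) ι rfl σ
  haveI : IsTotal (ι × ℕ) (fun q q' => q.2 ≤ q'.2) := ⟨fun a b => le_total a.2 b.2⟩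
  haveI : IsTrans (ι × ℕ) (fun q q' => q.2 ≤ q'.2) := ⟨fun a b c hab hbc => le_trans hab hbc⟩
  set pts' := List.insertionSort (fun q q' => q.2 ≤ q'.2) pts with hpts'
  have hps : pts'.Perm pts := List.perm_insertionSort _ _
  set word := pts.flatMap (fun q => clist σ q.1 q.2) with hword
  set word' := pts'.flatMap (fun q => clist σ q.1 q.2) with hword'
  have hwp : word'.Perm word := List.Perm.flatMap_right _ hps
  have hc1' : ∀ q ∈ pts', 0 < q.2 ∧ (σ^q.2) q.1 = q.1 := fun q hq => hc1 q (hps.mem_iff.mp hq)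
  have hc2' : word'.Nodup := hwp.nodup_iff.mpr hc2
  have hc3' : ∀ y : ι, y ∈ word' := fun y => hwp.mem_iff.mpr (hc3 y)
  have heval := eval_cycles pts'.length ι σ pts' rfl hc1' hc2' hc3'
  have hsorted : (pts'.map Prod.snd).Pairwise (· ≤ ·) := by
    have hs := List.pairwise_insertionSort (fun q q' : ι × ℕ => q.2 ≤ q'.2) pts
    rw [List.pairwise_map]
    exact hs
  have hws : word.Perm s := by
    refine List.perm_of_nodup_nodup_toFinset_eq hc2 hnd ?_
    ext z
    simp only [List.mem_toFinset]
    exact ⟨fun _ => hcomp z, fun _ => hc3 z⟩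
  have hwordlen : word.length = n := by rw [hws.length_eq, hlen]
  have hbounds : ∀ k ∈ pts'.map Prod.snd, 1 ≤ k ∧ k ≤ m := by
    intro k hk
    obtain ⟨q, hq, rfl⟩ := List.mem_map.mp hk
    refine ⟨(hc1' q hq).1, ?_⟩
    have hmm : (clist σ q.1 q.2).length
        ∈ pts'.map (fun q => (clist σ q.1 q.2).length) :=
      List.mem_map_of_mem hq
    have hle := List.single_le_sum
      (l := pts'.map (fun q => (clist σ q.1 q.2).length))
      (fun x _ => Nat.zero_le x) _ hmm
    rw [← List.length_flatMap] at hle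
    have hlc : (clist σ q.1 q.2).length = q.2 := by
      rw [clist, List.length_ofFn]
    have hwl : word'.length = n := by rw [hwp.length_eq, hwordlen]
    rw [hlc] at hle
    have hle2 : q.2 ≤ word'.length := hword' ▸ hle
    omega
  have hGoodProd : Good m (fun N => (pts'.map fun q => casimir N q.2).prod) := by
    have hgp := Good.casprod (m := m) (pts'.map Prod.snd) hsorted hbounds
    refine hgp.congr (fun N _ => ?_)
    rw [List.map_map]
    rfl
  have hGword' : Good m (fun N => WS N ι word' ⇑σ) :=
    hGoodProd.congr (fun N _ => heval N)
  have hfinal := (Rperm word' s [] ((hwp.trans hws).symm) (List.Perm.refl _)).add hGword'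
  refine hfinal.congr (fun N _ => ?_)
  show WS N ι s ⇑σ = WS N ι (List.nil ++ s) ⇑σ - WS N ι (List.nil ++ word') ⇑σ
    + WS N ι word' ⇑σ
  rw [List.nil_append, List.nil_append]
  abel

end WUniv

/-- Universality: for every permutation `σ` of `{1,…,m}` there is a single polynomial `P`
with integer coefficients in the `m+1` variables `y, x_1, …, x_m` such that for every
`N ≥ 1`, `w_{gl_N}(σ) = P(N·1, C_1, …, C_m)` in `U(gl_N)`; `P` does not depend on `N`. -/
theorem wgl_universal (m : ℕ) (σ : Equiv.Perm (Fin m)) :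
    ∃ P : MvPolynomial (Fin (m + 1)) ℤ,
      ∀ N : ℕ, 1 ≤ N → wgl N m σ = evalAtCasimirs N m P := by
  obtain ⟨P, hP⟩ := WUniv.main m m le_rfl (Fin m) σ (List.finRange m)
    (List.nodup_finRange m) (fun x => List.mem_finRange x) List.length_finRange
  refine ⟨P, fun N hN => ?_⟩
  rw [WUniv.wgl_eq_WS]
  exact hP N hN
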